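/- arXiv:math/0009079 — 2 statements merged into one kernel-verified Lean document; each statement's English description precedes it below -/
import Mathlib

section
/- (Trichotomy) Let A be an infinite set, I an ideal over A, and λ > |A|⁺ a regular cardinal. If ⟨f_α : α < λ⟩ is a sequence of ordinal-valued functions on A that is increasing in the order <_I (f <_I g iff {a : f(a) ≥ g(a)} ∈ I), then at least one of the following holds: (Good) the sequence has an exact upper bound f with cf(f(a)) > |A| for all a ∈ A; (Bad) there are sets S(a) ⊆ Ord with |S(a)| ≤ |A| for a ∈ A, and an ultrafilter D on A disjoint from I, such that for every α < λ there exist h_α ∈ ∏_a S(a) and β < λ with f_α <_D h_α <_D f_β; (Ugly) there is g : A → Ord such that, setting t_α = {a ∈ A : f_α(a) > g(a)}, the sequence ⟨t_α : α < λ⟩ does not eventually stabilize modulo I. -/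
open Cardinal Set

noncomputable section

/-- `f <_I g` : the set where `f` is not below `g` is in the ideal `I`. -/
def ltIdeal {A : Type} (I : Set (Set A)) (f g : A → Ordinal.{0}) : Prop :=
  {a | g a ≤ f a} ∈ I

namespace Stmt10

variable {A : Type} (I : Set (Set A)) (f : Ordinal.{0} → A → Ordinal.{0}) (lo : Ordinal.{0})

/-- the set where `g` is strictly below `f α` -/
def tset (g : A → Ordinal.{0}) (α : Ordinal.{0}) : Set A := {a | g a < f α a}

def StabProp (g : A → Ordinal.{0}) (α₀ : Ordinal.{0}) : Prop :=
  ∀ α β, α₀ ≤ α → α ≤ β → β < lo →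
    symmDiff (tset f g α) (tset f g β) ∈ I

/-- non-Ugly hypothesis -/
def HStab : Prop := ∀ g : A → Ordinal.{0}, ∃ α₀, α₀ < lo ∧ StabProp I f lo g α₀

/-- increasing mod I hypothesis -/
def HInc : Prop := ∀ α β, α < β → β < lo → {a | f β a ≤ f α a} ∈ I

/-- downward closure + union closure + ∅ -/
def HIdeal : Prop := ∅ ∈ I ∧ (∀ s ∈ I, ∀ t, t ⊆ s → t ∈ I) ∧ (∀ s ∈ I, ∀ t ∈ I, s ∪ t ∈ I)

variable {I f lo}

theorem HIdeal.sub (hI : HIdeal I) {s t : Set A} (h : t ⊆ s) (hs : s ∈ I) : t ∈ I :=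
  hI.2.1 s hs t h

theorem HIdeal.un (hI : HIdeal I) {s t : Set A} (hs : s ∈ I) (ht : t ∈ I) : s ∪ t ∈ I :=
  hI.2.2 s hs t ht

/-- pointwise strict upper bound of the whole sequence -/
def g0 (f : Ordinal.{0} → A → Ordinal.{0}) (lo : Ordinal.{0}) : A → Ordinal.{0} :=
  fun a => sSup (Set.range fun α : Iio lo => f α.1 a) + 1

theorem g0_lt {α : Ordinal.{0}} (hα : α < lo) (a : A) : f α a < g0 f lo a := by
  have h1 : f α a ≤ sSup (Set.range fun β : Iio lo => f β.1 a) :=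
    le_csSup Ordinal.bddAbove_of_small ⟨⟨α, hα⟩, rfl⟩
  rw [g0, Ordinal.add_one_eq_succ]
  exact Order.lt_succ_iff.2 h1

/-- least element of `S a` strictly above `f α a` -/
def minAb (f : Ordinal.{0} → A → Ordinal.{0}) (S : A → Set Ordinal.{0}) (α : Ordinal.{0}) :
    A → Ordinal.{0} :=
  fun a => sInf {x | x ∈ S a ∧ f α a < x}

section minAb

variable {S : A → Set Ordinal.{0}}

theorem minAb_mem (hgS : ∀ a, g0 f lo a ∈ S a) {α : Ordinal.{0}} (hα : α < lo) (a : A) :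
    minAb f S α a ∈ S a ∧ f α a < minAb f S α a :=
  csInf_mem (⟨g0 f lo a, hgS a, g0_lt hα a⟩ : Set.Nonempty {x | x ∈ S a ∧ f α a < x})

theorem minAb_le {α : Ordinal.{0}} {a : A} {x : Ordinal.{0}} (hx : x ∈ S a) (hfx : f α a < x) :
    minAb f S α a ≤ x :=
  csInf_le (OrderBot.bddBelow _) ⟨hx, hfx⟩

end minAb

section stab

variable (hstab : HStab I f lo)

def stab (g : A → Ordinal.{0}) : Ordinal.{0} := (hstab g).choose

theorem stab_lt (g : A → Ordinal.{0}) : stab hstab g < lo := (hstab g).choose_spec.1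

theorem stab_spec (g : A → Ordinal.{0}) : StabProp I f lo g (stab hstab g) :=
  (hstab g).choose_spec.2

/-- the (mod `I`) eventual value of the `tset`s of `g` -/
def wset (g : A → Ordinal.{0}) : Set A := tset f g (stab hstab g)

theorem tset_diff (hI : HIdeal I) (g : A → Ordinal.{0}) {β : Ordinal.{0}}
    (hβ1 : stab hstab g ≤ β) (hβ2 : β < lo) :
    tset f g β \ wset hstab g ∈ I ∧ wset hstab g \ tset f g β ∈ I := by
  have h := stab_spec hstab g (stab hstab g) β le_rfl hβ1 hβ2
  constructor
  · exact hI.sub (fun a ha => Or.inr ⟨ha.1, ha.2⟩) h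
  · exact hI.sub (fun a ha => Or.inl ⟨ha.1, ha.2⟩) h

/-- if the stable tset is null, then `g` is a strict upper bound mod `I`. -/
theorem stuck (hI : HIdeal I) (hinc : HInc I f lo) (hlim : Order.IsSuccLimit lo)
    {g : A → Ordinal.{0}} (hw : wset hstab g ∈ I) {γ : Ordinal.{0}} (hγ : γ < lo) :
    {a | g a ≤ f γ a} ∈ I := by
  set γ' := Order.succ (max γ (stab hstab g)) with hγ'def
  have hγ' : γ' < lo := hlim.succ_lt (max_lt hγ (stab_lt hstab g))
  have hγγ' : γ < γ' := (le_max_left _ _).trans_lt (Order.lt_succ _)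
  have hsγ' : stab hstab g ≤ γ' := (le_max_right _ _).trans (Order.le_succ _)
  have hsub : {a | g a ≤ f γ a} ⊆
      {a | f γ' a ≤ f γ a} ∪ ((tset f g γ' \ wset hstab g) ∪ wset hstab g) := by
    intro a ha
    by_cases h1 : f γ' a ≤ f γ a
    · exact Or.inl h1
    · have h2 : g a < f γ' a := lt_of_le_of_lt ha (not_le.1 h1)
      by_cases h3 : a ∈ wset hstab g
      · exact Or.inr (Or.inr h3)
      · exact Or.inr (Or.inl ⟨h2, h3⟩)
  exact hI.sub hsub (hI.un (hinc γ γ' hγγ' hγ')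
    (hI.un ((tset_diff hstab hI g hsγ' hγ').1) hw))

end stab


section stage

variable (hstab : HStab I f lo) {S : A → Set Ordinal.{0}}

theorem minAb_lt_mono (hI : HIdeal I) (hinc : HInc I f lo) (hgS : ∀ a, g0 f lo a ∈ S a)
    {α γ : Ordinal.{0}} (hαγ : α ≤ γ) (hγ : γ < lo) :
    {a | minAb f S γ a < minAb f S α a} ∈ I := by
  rcases eq_or_lt_of_le hαγ with rfl | h
  · have he : {a | minAb f S α a < minAb f S α a} = (∅ : Set A) := by ext a; simp
    rw [he]; exact hI.1
  · refine hI.sub (fun a ha => ?_) (hinc α γ h hγ)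
    by_contra hc
    have h1 : f α a < f γ a := not_le.1 hc
    have hm := minAb_mem hgS hγ a
    exact absurd (minAb_le hm.1 (h1.trans hm.2)) (not_le.2 ha)

theorem minAb_stable (hI : HIdeal I) (hinc : HInc I f lo) (hlim : Order.IsSuccLimit lo)
    (hgS : ∀ a, g0 f lo a ∈ S a) {α : Ordinal.{0}} (hα : α < lo)
    (hw : wset hstab (minAb f S α) ∈ I) {γ : Ordinal.{0}} (hγlo : γ < lo) (h1 : α ≤ γ) :
    {a | minAb f S γ a ≠ minAb f S α a} ∈ I := by
  have hsub : {a | minAb f S γ a ≠ minAb f S α a} ⊆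
      {a | minAb f S γ a < minAb f S α a} ∪ {a | minAb f S α a ≤ f γ a} := by
    intro a ha
    rcases lt_or_gt_of_ne ha with h2 | h2
    · exact Or.inl h2
    · by_cases h3 : f γ a < minAb f S α a
      · exact absurd (minAb_le (minAb_mem hgS hα a).1 h3) (not_le.2 h2)
      · exact Or.inr (not_lt.1 h3)
  exact hI.sub hsub (hI.un (minAb_lt_mono hI hinc hgS h1 hγlo)
    (stuck hstab hI hinc hlim hw hγlo))

theorem wset_mono (hI : HIdeal I) (hinc : HInc I f lo)
    (hgS : ∀ a, g0 f lo a ∈ S a) {α α' : Ordinal.{0}} (hle : α ≤ α') (hα' : α' < lo) :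
    wset hstab (minAb f S α') \ wset hstab (minAb f S α) ∈ I := by
  set m := minAb f S α with hm
  set m' := minAb f S α' with hm'
  set β := max (stab hstab m) (stab hstab m') with hβ
  have hβlo : β < lo := max_lt (stab_lt hstab m) (stab_lt hstab m')
  have hsub : wset hstab m' \ wset hstab m ⊆
      (wset hstab m' \ tset f m' β) ∪ ((tset f m' β \ tset f m β) ∪ (tset f m β \ wset hstab m)) := by
    intro a ha
    by_cases h1 : a ∈ tset f m' β
    · by_cases h2 : a ∈ tset f m β
      · exact Or.inr (Or.inr ⟨h2, ha.2⟩)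
      · exact Or.inr (Or.inl ⟨h1, h2⟩)
    · exact Or.inl ⟨ha.1, h1⟩
  have hmid : tset f m' β \ tset f m β ⊆ {a | m' a < m a} := by
    intro a ha
    have h1 : m' a < f β a := ha.1
    have h2 : f β a ≤ m a := not_lt.1 ha.2
    exact h1.trans_le h2
  refine hI.sub hsub (hI.un ((tset_diff hstab hI m' (le_max_right _ _) hβlo).2)
    (hI.un (hI.sub hmid (minAb_lt_mono hI hinc hgS hle hα')) ?_))
  exact (tset_diff hstab hI m (le_max_left _ _) hβlo).1

end stage

/-- Ultrafilter extending the dual of `I` and containing a `⊆ᵢ`-decreasing positive chain. -/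
theorem exists_ultra (hI : HIdeal I) {W : Ordinal.{0} → Set A}
    (hpos : ∀ α, α < lo → W α ∉ I)
    (hmono : ∀ α α', α ≤ α' → α' < lo → W α' \ W α ∈ I) (hlo : 0 < lo) :
    ∃ D : Ultrafilter A, (∀ s ∈ I, sᶜ ∈ D) ∧ ∀ α, α < lo → W α ∈ D := by
  let F : Filter A :=
    { sets := {t | ∃ α, α < lo ∧ ∃ s ∈ I, W α \ s ⊆ t}
      univ_sets := ⟨0, hlo, ∅, hI.1, subset_univ _⟩
      sets_of_superset := by
        rintro x y ⟨α, hα, s, hs, hsub⟩ hxy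
        exact ⟨α, hα, s, hs, hsub.trans hxy⟩
      inter_sets := by
        rintro x y ⟨α, hα, s, hs, hsub⟩ ⟨α', hα', s', hs', hsub'⟩
        rcases le_total α α' with hle | hle
        · refine ⟨α', hα', s ∪ (s' ∪ (W α' \ W α)), hI.un hs (hI.un hs' (hmono α α' hle hα')), ?_⟩
          rintro a ⟨ha1, ha2⟩
          simp only [mem_union, not_or] at ha2
          have haα : a ∈ W α := by
            by_contra hc
            exact ha2.2.2 ⟨ha1, hc⟩
          exact ⟨hsub ⟨haα, ha2.1⟩, hsub' ⟨ha1, ha2.2.1⟩⟩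
        · refine ⟨α, hα, s' ∪ (s ∪ (W α \ W α')), hI.un hs' (hI.un hs (hmono α' α hle hα)), ?_⟩
          rintro a ⟨ha1, ha2⟩
          simp only [mem_union, not_or] at ha2
          have haα : a ∈ W α' := by
            by_contra hc
            exact ha2.2.2 ⟨ha1, hc⟩
          exact ⟨hsub ⟨ha1, ha2.2.1⟩, hsub' ⟨haα, ha2.1⟩⟩ }
  have hFne : F.NeBot := by
    rw [Filter.neBot_iff]
    intro hbot
    have : (∅ : Set A) ∈ F := hbot ▸ Filter.mem_bot
    rcases this with ⟨α, hα, s, hs, hsub⟩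
    have : W α ⊆ s := fun a ha => by
      by_contra hc
      exact hsub ⟨ha, hc⟩
    exact hpos α hα (hI.sub this hs)
  refine ⟨Ultrafilter.of F, fun s hs => ?_, fun α hα => ?_⟩
  · exact Ultrafilter.of_le F ⟨0, hlo, s, hs, fun a ha => ha.2⟩
  · exact Ultrafilter.of_le F ⟨α, hα, ∅, hI.1, fun a ha => ha.1⟩



/-- The Bad branch: if no min-function ever gets stuck, we get the Bad alternative. -/
theorem badBranch (hstab : HStab I f lo) (hI : HIdeal I) (hinc : HInc I f lo)
    (hlim : Order.IsSuccLimit lo) {S : A → Set Ordinal.{0}} (hgS : ∀ a, g0 f lo a ∈ S a)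
    (hcard : ∀ a, Cardinal.mk (S a) ≤ Cardinal.lift.{1,0} (Cardinal.mk A))
    (hB : ∀ α, α < lo → wset hstab (minAb f S α) ∉ I) :
    ∃ SS : A → Set Ordinal.{0},
      (∀ a, Cardinal.mk (SS a) ≤ Cardinal.lift.{1,0} (Cardinal.mk A)) ∧
      ∃ D : Ultrafilter A, (∀ s ∈ I, sᶜ ∈ D) ∧
        ∀ α, α < lo → ∃ h : A → Ordinal.{0}, (∀ a, h a ∈ SS a) ∧
          ∃ β, β < lo ∧ {a | f α a < h a} ∈ D ∧ {a | h a < f β a} ∈ D := by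
  obtain ⟨D, hD1, hDW⟩ := exists_ultra hI (W := fun α => wset hstab (minAb f S α)) hB
    (fun α α' hle hα' => wset_mono hstab hI hinc hgS hle hα') hlim.pos
  refine ⟨S, hcard, D, hD1, fun α hα => ?_⟩
  have hα1 : Order.succ α < lo := hlim.succ_lt hα
  set h := minAb f S (Order.succ α) with hh
  refine ⟨h, fun a => (minAb_mem hgS hα1 a).1, stab hstab h, stab_lt hstab h, ?_, ?_⟩
  · have hIin : {a | f (Order.succ α) a ≤ f α a} ∈ I := hinc α _ (Order.lt_succ α) hα1
    have hcompl : {a | f (Order.succ α) a ≤ f α a}ᶜ ∈ D := hD1 _ hIin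
    refine (D : Filter A).mem_of_superset hcompl ?_
    intro a ha
    have h1 : f α a < f (Order.succ α) a := not_le.1 ha
    exact h1.trans (minAb_mem hgS hα1 a).2
  · exact hDW _ hα1


section rec

open scoped Classical

variable (I f lo) (hstab : HStab I f lo)

/-- index at which the min-functions over `S` get stuck (if one exists) -/
def alpha1 (S : A → Set Ordinal.{0}) : Ordinal.{0} :=
  if h : ∃ α, α < lo ∧ wset hstab (minAb f S α) ∈ I then h.choose else 0

def Hfun (S : A → Set Ordinal.{0}) : A → Ordinal.{0} := minAb f S (alpha1 I f lo hstab S)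

/-- a witness that `Hfun` is not an exact upper bound (if one exists) -/
def Vw (S : A → Set Ordinal.{0}) : A → Ordinal.{0} :=
  if h : ∃ v : A → Ordinal.{0}, {a | Hfun I f lo hstab S a ≤ v a} ∈ I ∧
      ∀ γ, γ < lo → {a | f γ a ≤ v a} ∉ I then h.choose else fun _ => 0

def stepW (S : A → Set Ordinal.{0}) : A → Ordinal.{0} := fun a =>
  if Hfun I f lo hstab S a ≤ Vw I f lo hstab S a then 0 else Vw I f lo hstab S a

/-- the transfinite sequence of witnesses -/
def Wrec : Ordinal.{0} → A → Ordinal.{0} :=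
  Ordinal.lt_wf.fix fun r rec =>
    stepW I f lo hstab fun a => insert (g0 f lo a) {x | ∃ r', ∃ _h : r' < r, rec r' _h a = x}

/-- the families of past values -/
def Sfam (r : Ordinal.{0}) : A → Set Ordinal.{0} := fun a =>
  insert (g0 f lo a) {x | ∃ r', ∃ _h : r' < r, Wrec I f lo hstab r' a = x}

theorem Wrec_eq (r : Ordinal.{0}) :
    Wrec I f lo hstab r = stepW I f lo hstab (Sfam I f lo hstab r) := by
  rw [Wrec, WellFounded.fix_eq]
  rfl

theorem Sfam_g0 (r : Ordinal.{0}) (a : A) : g0 f lo a ∈ Sfam I f lo hstab r a :=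
  mem_insert _ _

theorem Sfam_mono {r r' : Ordinal.{0}} (h : r ≤ r') (a : A) :
    Sfam I f lo hstab r a ⊆ Sfam I f lo hstab r' a := by
  rintro x (hx | ⟨q, hq, hqx⟩)
  · exact Or.inl hx
  · exact Or.inr ⟨q, hq.trans_le h, hqx⟩

theorem Sfam_card (hA : Infinite A) {r : Ordinal.{0}}
    (hr : r < (Order.succ (Cardinal.mk A)).ord) (a : A) :
    Cardinal.mk (Sfam I f lo hstab r a) ≤ Cardinal.lift.{1,0} (Cardinal.mk A) := by
  have h1 : {x | ∃ r', ∃ _h : r' < r, Wrec I f lo hstab r' a = x} =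
      Set.range (fun p : Iio r => Wrec I f lo hstab p.1 a) := by
    ext x
    constructor
    · rintro ⟨r', hr', hx⟩; exact ⟨⟨r', hr'⟩, hx⟩
    · rintro ⟨⟨r', hr'⟩, hx⟩; exact ⟨r', hr', hx⟩
  have h2 : Cardinal.mk {x | ∃ r', ∃ _h : r' < r, Wrec I f lo hstab r' a = x} ≤
      Cardinal.lift.{1,0} (Cardinal.mk A) := by
    rw [h1]
    refine mk_range_le.trans ?_
    rw [Ordinal.mk_Iio_ordinal]
    have h3 : r.card ≤ Cardinal.mk A := Order.lt_succ_iff.1 (Cardinal.lt_ord.1 hr)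
    exact Cardinal.lift_le.2 h3
  refine (mk_insert_le).trans ?_
  have h4 : (ℵ₀ : Cardinal.{1}) ≤ Cardinal.lift.{1,0} (Cardinal.mk A) := by
    rw [Cardinal.aleph0_le_lift]
    exact Cardinal.aleph0_le_mk A
  calc Cardinal.mk {x | ∃ r', ∃ _h : r' < r, Wrec I f lo hstab r' a = x} + 1
      ≤ Cardinal.lift.{1,0} (Cardinal.mk A) + 1 := by
        exact add_le_add_left h2 1
    _ = Cardinal.lift.{1,0} (Cardinal.mk A) := Cardinal.add_one_eq h4

end rec


section stageSpec

variable (hstab : HStab I f lo) {S : A → Set Ordinal.{0}}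

theorem alpha1_spec (hcond : ∃ α, α < lo ∧ wset hstab (minAb f S α) ∈ I) :
    alpha1 I f lo hstab S < lo ∧ wset hstab (minAb f S (alpha1 I f lo hstab S)) ∈ I := by
  have h : alpha1 I f lo hstab S = hcond.choose := dif_pos hcond
  constructor
  · rw [h]; exact hcond.choose_spec.1
  · rw [h]; exact hcond.choose_spec.2

theorem Hfun_ub (hI : HIdeal I) (hinc : HInc I f lo) (hlim : Order.IsSuccLimit lo)
    (hcond : ∃ α, α < lo ∧ wset hstab (minAb f S α) ∈ I) :
    ∀ γ, γ < lo → {a | Hfun I f lo hstab S a ≤ f γ a} ∈ I :=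
  fun _ hγ => stuck hstab hI hinc hlim (alpha1_spec hstab hcond).2 hγ

theorem Vw_spec (hvcond : ∃ v : A → Ordinal.{0}, {a | Hfun I f lo hstab S a ≤ v a} ∈ I ∧
    ∀ γ, γ < lo → {a | f γ a ≤ v a} ∉ I) :
    {a | Hfun I f lo hstab S a ≤ Vw I f lo hstab S a} ∈ I ∧
      ∀ γ, γ < lo → {a | f γ a ≤ Vw I f lo hstab S a} ∉ I := by
  have h : Vw I f lo hstab S = hvcond.choose := dif_pos hvcond
  constructor
  · rw [h]; exact hvcond.choose_spec.1
  · rw [h]; exact hvcond.choose_spec.2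

theorem stepW_lt (hgS : ∀ a, g0 f lo a ∈ S a)
    (hcond : ∃ α, α < lo ∧ wset hstab (minAb f S α) ∈ I) :
    ∀ a, stepW I f lo hstab S a < Hfun I f lo hstab S a := by
  intro a
  have hpos : 0 < Hfun I f lo hstab S a :=
    lt_of_le_of_lt (zero_le (a := _)) (minAb_mem hgS (alpha1_spec hstab hcond).1 a).2
  by_cases h : Hfun I f lo hstab S a ≤ Vw I f lo hstab S a
  · have he : stepW I f lo hstab S a = 0 := if_pos h
    rw [he]; exact hpos
  · have he : stepW I f lo hstab S a = Vw I f lo hstab S a := if_neg h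
    rw [he]; exact not_le.1 h

theorem stepW_nondom (hI : HIdeal I)
    (hvcond : ∃ v : A → Ordinal.{0}, {a | Hfun I f lo hstab S a ≤ v a} ∈ I ∧
      ∀ γ, γ < lo → {a | f γ a ≤ v a} ∉ I) :
    ∀ γ, γ < lo → {a | f γ a ≤ stepW I f lo hstab S a} ∉ I := by
  intro γ hγ hmem
  refine (Vw_spec hstab hvcond).2 γ hγ
    (hI.sub (fun a ha => ?_) (hI.un hmem (Vw_spec hstab hvcond).1))
  by_cases h : Hfun I f lo hstab S a ≤ Vw I f lo hstab S a
  · exact Or.inr h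
  · have he : stepW I f lo hstab S a = Vw I f lo hstab S a := if_neg h
    exact Or.inl (by rw [mem_setOf_eq, he]; exact ha)

end stageSpec


/-- The main construction: assuming not-Ugly and not-Bad, there is an exact upper bound. -/
theorem exists_eub (hA : Infinite A) (hI : HIdeal I) {lam : Cardinal.{0}}
    (hreg : lam.IsRegular) (hgt : Order.succ (Cardinal.mk A) < lam)
    (hstab : HStab I f lam.ord) (hinc : HInc I f lam.ord)
    (hBadneg : ¬ ∃ SS : A → Set Ordinal.{0},
      (∀ a, Cardinal.mk (SS a) ≤ Cardinal.lift.{1,0} (Cardinal.mk A)) ∧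
      ∃ D : Ultrafilter A, (∀ s ∈ I, sᶜ ∈ D) ∧
        ∀ α, α < lam.ord → ∃ h : A → Ordinal.{0}, (∀ a, h a ∈ SS a) ∧
          ∃ β, β < lam.ord ∧ {a | f α a < h a} ∈ D ∧ {a | h a < f β a} ∈ D) :
    ∃ g : A → Ordinal.{0}, (∀ α, α < lam.ord → {a | g a ≤ f α a} ∈ I) ∧
      ∀ h : A → Ordinal.{0}, {a | g a ≤ h a} ∈ I →
        ∃ β, β < lam.ord ∧ {a | f β a ≤ h a} ∈ I := by
  classical
  set lo := lam.ord with hlo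
  have hlim : Order.IsSuccLimit lo := Cardinal.isSuccLimit_ord hreg.aleph0_le
  by_contra hne
  push_neg at hne
  -- hne : ∀ g, (∀ α < lo, _ ∈ I) → ∃ h, {g ≤ h} ∈ I ∧ ∀ β, β < lo → {f β ≤ h} ∉ I
  set R := (Order.succ (Cardinal.mk A)).ord with hR
  have hRlim : Order.IsSuccLimit R :=
    Cardinal.isSuccLimit_ord ((Cardinal.aleph0_le_mk A).trans (Order.le_succ _))
  -- stage facts
  have hcond : ∀ r, r < R →
      ∃ α, α < lo ∧ wset hstab (minAb f (Sfam I f lo hstab r) α) ∈ I := by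
    intro r hr
    by_contra hc
    push_neg at hc
    exact hBadneg (badBranch hstab hI hinc hlim (Sfam_g0 I f lo hstab r)
      (fun a => Sfam_card I f lo hstab hA hr a) hc)
  have hvcond : ∀ r, r < R →
      ∃ v : A → Ordinal.{0}, {a | Hfun I f lo hstab (Sfam I f lo hstab r) a ≤ v a} ∈ I ∧
        ∀ γ, γ < lo → {a | f γ a ≤ v a} ∉ I := by
    intro r hr
    have hub := Hfun_ub hstab hI hinc hlim (hcond r hr)
    obtain ⟨h, hh1, hh2⟩ := hne _ (fun α hα => hub α hα)
    exact ⟨h, hh1, hh2⟩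
  have hWlt : ∀ r, r < R → ∀ a,
      Wrec I f lo hstab r a < Hfun I f lo hstab (Sfam I f lo hstab r) a := by
    intro r hr a
    rw [Wrec_eq]
    exact stepW_lt hstab (Sfam_g0 I f lo hstab r) (hcond r hr) a
  have hWnd : ∀ r, r < R → ∀ γ, γ < lo → {a | f γ a ≤ Wrec I f lo hstab r a} ∉ I := by
    intro r hr γ hγ
    rw [Wrec_eq]
    exact stepW_nondom hstab hI (hvcond r hr) γ hγ
  -- the limit family
  set SR := Sfam I f lo hstab R with hSR
  have hgSR : ∀ a, g0 f lo a ∈ SR a := Sfam_g0 I f lo hstab R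
  -- attainment
  have hatt : ∀ α, α < lo → ∃ r, r < R ∧ ∀ a, minAb f SR α a ∈ Sfam I f lo hstab r a := by
    intro α hα
    set c : A → Ordinal.{0} := fun a =>
      if h : ∃ r', r' < R ∧ Wrec I f lo hstab r' a = minAb f SR α a
      then Order.succ h.choose else 0 with hc
    have hcR : ∀ a, c a < R := by
      intro a
      simp only [hc]
      by_cases h : ∃ r', r' < R ∧ Wrec I f lo hstab r' a = minAb f SR α a
      · rw [dif_pos h]; exact hRlim.succ_lt h.choose_spec.1
      · rw [dif_neg h]; exact hRlim.pos
    refine ⟨iSup c, Ordinal.iSup_lt_ord ?_ hcR, ?_⟩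
    · rw [hR, (Cardinal.isRegular_succ (Cardinal.aleph0_le_mk A)).cof_eq]
      exact Order.lt_succ _
    · intro a
      have hmem := (minAb_mem (S := SR) hgSR hα a).1
      rcases Set.mem_insert_iff.1 hmem with h0 | ⟨r', hr', hval⟩
      · exact Set.mem_insert_iff.2 (Or.inl h0)
      · have hex : ∃ q, q < R ∧ Wrec I f lo hstab q a = minAb f SR α a := ⟨r', hr', hval⟩
        refine Set.mem_insert_iff.2 (Or.inr ⟨hex.choose, ?_, hex.choose_spec.2⟩)
        have hca : c a = Order.succ hex.choose := by simp only [hc]; exact dif_pos hex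
        calc hex.choose < c a := by rw [hca]; exact Order.lt_succ _
          _ ≤ iSup c := le_ciSup (Ordinal.bddAbove_range c) a
  -- fiber: one stage works unboundedly often
  have hfiber : ∃ rs, rs < R ∧ ∀ γ, γ < lo →
      ∃ α, γ ≤ α ∧ α < lo ∧ ∀ a, minAb f SR α a ∈ Sfam I f lo hstab rs a := by
    by_contra hcf
    push_neg at hcf
    set bnd : Ordinal.{0} → Ordinal.{0} := fun r =>
      if h : ∃ γ, γ < lo ∧ ∀ α, γ ≤ α → α < lo →
          ¬ ∀ a, minAb f SR α a ∈ Sfam I f lo hstab r a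
      then h.choose else 0 with hbnddef
    have hbnd : ∀ r, r < R → bnd r < lo ∧ ∀ α, bnd r ≤ α → α < lo →
        ¬ ∀ a, minAb f SR α a ∈ Sfam I f lo hstab r a := by
      intro r hr
      obtain ⟨γ, hγ1, hγ2⟩ := hcf r hr
      have hex : ∃ γ, γ < lo ∧ ∀ α, γ ≤ α → α < lo →
          ¬ ∀ a, minAb f SR α a ∈ Sfam I f lo hstab r a :=
        ⟨γ, hγ1, fun α h1 h2 hall => (hγ2 α h1 h2).elim (fun a ha => ha (hall a))⟩
      have hb : bnd r = hex.choose := by simp only [hbnddef]; exact dif_pos hex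
      rw [hb]
      exact hex.choose_spec
    set ee : Shrink (Iio R) ≃ (Iio R) := (equivShrink (Iio R)).symm with hee
    set Γ : Ordinal.{0} := iSup (fun q : Shrink (Iio R) => bnd (ee q).1) with hΓdef
    have hcardR : Cardinal.mk (Shrink (Iio R)) = Order.succ (Cardinal.mk A) := by
      have h1 : Cardinal.lift.{1} (Cardinal.mk (Shrink.{0} (Iio R))) =
          Cardinal.lift.{0} (Cardinal.mk (Iio R)) := Cardinal.lift_mk_shrink' _
      rw [Cardinal.lift_id'.{0,1}, Ordinal.mk_Iio_ordinal, hR, Cardinal.card_ord] at h1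
      exact Cardinal.lift_injective h1
    have hΓ : Γ < lo := by
      refine Ordinal.iSup_lt_ord ?_ (fun q => (hbnd _ (ee q).2).1)
      rw [hcardR, hlo, hreg.cof_eq]
      exact hgt
    have hsΓ : Order.succ Γ < lo := hlim.succ_lt hΓ
    obtain ⟨r, hrR, hatt'⟩ := hatt _ hsΓ
    refine (hbnd r hrR).2 (Order.succ Γ) ?_ hsΓ hatt'
    have h5 : bnd r ≤ Γ := by
      have h6 : bnd ((ee (equivShrink (Iio R) ⟨r, hrR⟩)).1) ≤ Γ :=
        le_ciSup (Ordinal.bddAbove_range _) (equivShrink (Iio R) ⟨r, hrR⟩)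
      rwa [hee, Equiv.symm_apply_apply] at h6
    exact h5.trans (Order.le_succ _)
  obtain ⟨rs, hrsR, hrs⟩ := hfiber
  set Ss := Sfam I f lo hstab rs with hSs
  have hgSs : ∀ a, g0 f lo a ∈ Ss a := Sfam_g0 I f lo hstab rs
  obtain ⟨α, hge, hαlo, hattα⟩ := hrs _ (alpha1_spec hstab (hcond rs hrsR)).1
  have hsα : Order.succ α < lo := hlim.succ_lt hαlo
  -- (i) the two min functions agree pointwise
  have hieq : ∀ a, minAb f SR α a = minAb f Ss α a := by
    intro a
    apply le_antisymm
    · exact minAb_le (S := SR)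
        (Sfam_mono I f lo hstab hrsR.le a (minAb_mem (S := Ss) hgSs hαlo a).1)
        (minAb_mem (S := Ss) hgSs hαlo a).2
    · exact minAb_le (S := Ss) (hattα a) (minAb_mem (S := SR) hgSR hαlo a).2
  -- (ii) stage-rs stabilization
  have hstable : {a | minAb f Ss α a ≠ Hfun I f lo hstab Ss a} ∈ I :=
    minAb_stable hstab hI hinc hlim hgSs (alpha1_spec hstab (hcond rs hrsR)).1
      (alpha1_spec hstab (hcond rs hrsR)).2 hαlo hge
  -- the witness at stage rs
  have hWlt' : ∀ a, Wrec I f lo hstab rs a < Hfun I f lo hstab Ss a := hWlt rs hrsR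
  -- (v) positivity
  have hpos : {a | f α a < Wrec I f lo hstab rs a} ∉ I := by
    intro hmem
    refine hWnd rs hrsR (Order.succ α) hsα
      (hI.sub (fun a ha => ?_) (hI.un hmem (hinc α (Order.succ α) (Order.lt_succ α) hsα)))
    by_cases h : f α a < Wrec I f lo hstab rs a
    · exact Or.inl h
    · exact Or.inr (le_trans ha (not_lt.1 h))
  -- (vi) the contradiction
  apply hpos
  refine hI.sub (fun a ha => ?_) hstable
  have hmin : minAb f SR α a ≤ Wrec I f lo hstab rs a :=
    minAb_le (S := SR) (Set.mem_insert_iff.2 (Or.inr ⟨rs, hrsR, rfl⟩)) ha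
  show minAb f Ss α a ≠ Hfun I f lo hstab Ss a
  intro heq
  rw [hieq a, heq] at hmin
  exact absurd (hmin.trans_lt (hWlt' a)) (lt_irrefl _)


/-- From an exact upper bound and not-Bad, we get the Good alternative. -/
theorem eub_good (hA : Infinite A) (hI : HIdeal I) (hlim : Order.IsSuccLimit lo)
    (hinc : HInc I f lo) (g : A → Ordinal.{0})
    (hub : ∀ α, α < lo → {a | g a ≤ f α a} ∈ I)
    (hex : ∀ h : A → Ordinal.{0}, {a | g a ≤ h a} ∈ I →
      ∃ β, β < lo ∧ {a | f β a ≤ h a} ∈ I)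
    (hBadneg : ¬ ∃ SS : A → Set Ordinal.{0},
      (∀ a, Cardinal.mk (SS a) ≤ Cardinal.lift.{1,0} (Cardinal.mk A)) ∧
      ∃ D : Ultrafilter A, (∀ s ∈ I, sᶜ ∈ D) ∧
        ∀ α, α < lo → ∃ h : A → Ordinal.{0}, (∀ a, h a ∈ SS a) ∧
          ∃ β, β < lo ∧ {a | f α a < h a} ∈ D ∧ {a | h a < f β a} ∈ D) :
    ∃ g' : A → Ordinal.{0}, (∀ α, α < lo → {a | g' a ≤ f α a} ∈ I) ∧
      (∀ h : A → Ordinal.{0}, {a | g' a ≤ h a} ∈ I →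
        ∃ β, β < lo ∧ {a | f β a ≤ h a} ∈ I) ∧
      ∀ a, Cardinal.mk A < (g' a).cof := by
  classical
  have hZ0 : {a | g a = 0} ∈ I :=
    hI.sub (fun a ha => show g a ≤ f 0 a by
      rw [show g a = 0 from ha]; exact zero_le (a := _)) (hub 0 hlim.pos)
  -- predecessor function
  set p : A → Ordinal.{0} := fun a =>
    if h : ∃ b, g a = Order.succ b then h.choose else 0 with hpdef
  have hpI : {a | g a ≤ p a} ∈ I := by
    refine hI.sub (fun a ha => ?_) hZ0
    simp only [mem_setOf_eq] at ha
    by_cases h : ∃ b, g a = Order.succ b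
    · exfalso
      have hp : p a = h.choose := by simp only [hpdef]; exact dif_pos h
      have hg : g a = Order.succ h.choose := h.choose_spec
      rw [hp] at ha
      have h3 : g a < g a := by
        calc g a ≤ h.choose := ha
          _ < Order.succ h.choose := Order.lt_succ _
          _ = g a := hg.symm
      exact absurd h3 (lt_irrefl _)
    · have hp : p a = 0 := by simp only [hpdef]; exact dif_neg h
      rw [hp] at ha
      show g a = 0
      exact nonpos_iff_eq_zero.1 ha
  obtain ⟨β, hβ, hpb⟩ := hex p hpI
  have hZs : {a | ∃ b, g a = Order.succ b} ∈ I := by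
    refine hI.sub (fun a ha => ?_) (hI.un hpb (hub β hβ))
    by_cases h1 : f β a ≤ p a
    · exact Or.inl h1
    · refine Or.inr ?_
      have hp : p a = (ha : ∃ b, g a = Order.succ b).choose := by
        simp only [hpdef]; exact dif_pos ha
      have hg : g a = Order.succ (ha : ∃ b, g a = Order.succ b).choose := ha.choose_spec
      show g a ≤ f β a
      rw [hg, ← hp]
      exact Order.succ_le_iff.2 (not_le.1 h1)
  set Zc : Set A := {a | Order.IsSuccLimit (g a) ∧ (g a).cof ≤ Cardinal.mk A} with hZcdef
  have hZc : Zc ∈ I := by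
    by_contra hc
    apply hBadneg
    have pk : ∀ a : A, ∃ T : Set Ordinal.{0},
        (Cardinal.mk T ≤ Cardinal.lift.{1,0} (Cardinal.mk A)) ∧ (0 : Ordinal.{0}) ∈ T ∧
        (Order.IsSuccLimit (g a) → (g a).cof ≤ Cardinal.mk A →
          ∀ y, y < g a → ∃ x, x ∈ T ∧ y < x ∧ x < g a) := by
      intro a
      by_cases hl : Order.IsSuccLimit (g a) ∧ (g a).cof ≤ Cardinal.mk A
      · obtain ⟨ι, F, hlsub, hcard⟩ := Ordinal.exists_lsub_cof (g a)
        refine ⟨insert 0 (Set.range F), ?_, mem_insert _ _, ?_⟩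
        · refine mk_insert_le.trans ?_
          have h2 : Cardinal.mk (Set.range F) ≤ Cardinal.lift.{1,0} (Cardinal.mk ι) := by
            have h3 := mk_range_le_lift (f := F)
            rwa [Cardinal.lift_id'.{0,1}] at h3
          have h4 : Cardinal.mk ι ≤ Cardinal.mk A := by rw [hcard]; exact hl.2
          have h5 : (ℵ₀ : Cardinal.{1}) ≤ Cardinal.lift.{1,0} (Cardinal.mk A) := by
            rw [Cardinal.aleph0_le_lift]; exact Cardinal.aleph0_le_mk A
          calc Cardinal.mk (Set.range F) + 1
              ≤ Cardinal.lift.{1,0} (Cardinal.mk A) + 1 :=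
                add_le_add_left (h2.trans (Cardinal.lift_le.2 h4)) 1
            _ = Cardinal.lift.{1,0} (Cardinal.mk A) := Cardinal.add_one_eq h5
        · intro hl1 _ y hy
          have hy1 : Order.succ y < g a := hl1.succ_lt hy
          rw [← hlsub] at hy1
          obtain ⟨i, hi⟩ := Ordinal.lt_lsub_iff.1 hy1
          refine ⟨F i, Or.inr ⟨i, rfl⟩, lt_of_lt_of_le (Order.lt_succ y) hi, ?_⟩
          rw [← hlsub]; exact Ordinal.lt_lsub F i
      · refine ⟨{0}, ?_, rfl, fun h1 h2 => absurd ⟨h1, h2⟩ hl⟩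
        have h5 : (1 : Cardinal.{1}) ≤ Cardinal.lift.{1,0} (Cardinal.mk A) := by
          refine le_trans ?_ (by rw [Cardinal.aleph0_le_lift]; exact Cardinal.aleph0_le_mk A)
          exact Cardinal.one_le_aleph0
        simpa using h5
    obtain ⟨D, hD1, hDW⟩ := exists_ultra (lo := lo) hI (W := fun _ => Zc)
      (fun _ _ => hc) (fun α α' _ _ => by rw [diff_self]; exact hI.1) hlim.pos
    refine ⟨fun a => (pk a).choose, fun a => (pk a).choose_spec.1, D, hD1, fun α hα => ?_⟩
    set h : A → Ordinal.{0} := fun a => if hc2 : a ∈ Zc ∧ f α a < g a then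
        ((pk a).choose_spec.2.2 hc2.1.1 hc2.1.2 (f α a) hc2.2).choose else 0 with hhdef
    have hmem : ∀ a, h a ∈ (pk a).choose := by
      intro a
      by_cases hc2 : a ∈ Zc ∧ f α a < g a
      · have hh : h a = ((pk a).choose_spec.2.2 hc2.1.1 hc2.1.2 (f α a) hc2.2).choose := by
          simp only [hhdef]; exact dif_pos hc2
        rw [hh]
        exact ((pk a).choose_spec.2.2 hc2.1.1 hc2.1.2 (f α a) hc2.2).choose_spec.1
      · have hh : h a = 0 := by simp only [hhdef]; exact dif_neg hc2
        rw [hh]; exact (pk a).choose_spec.2.1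
    have hlow : ∀ a, a ∈ Zc ∧ f α a < g a → f α a < h a ∧ h a < g a := by
      intro a hc2
      have hh : h a = ((pk a).choose_spec.2.2 hc2.1.1 hc2.1.2 (f α a) hc2.2).choose := by
        simp only [hhdef]; exact dif_pos hc2
      rw [hh]
      exact ⟨((pk a).choose_spec.2.2 hc2.1.1 hc2.1.2 (f α a) hc2.2).choose_spec.2.1,
        ((pk a).choose_spec.2.2 hc2.1.1 hc2.1.2 (f α a) hc2.2).choose_spec.2.2⟩
    have hgh : {a | g a ≤ h a} ∈ I := by
      refine hI.sub (fun a ha => ?_) hZ0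
      by_cases hc2 : a ∈ Zc ∧ f α a < g a
      · exact absurd ((hlow a hc2).2.trans_le ha) (lt_irrefl _)
      · have hh : h a = 0 := by simp only [hhdef]; exact dif_neg hc2
        simp only [mem_setOf_eq] at ha
        rw [hh] at ha
        show g a = 0
        exact nonpos_iff_eq_zero.1 ha
    obtain ⟨β', hβ', hfb⟩ := hex h hgh
    refine ⟨h, hmem, β', hβ', ?_, ?_⟩
    · have hD2 : Zc ∩ {a | g a ≤ f α a}ᶜ ∈ D :=
        Filter.inter_mem (hDW α hα) (hD1 _ (hub α hα))
      refine (D : Filter A).mem_of_superset hD2 (fun a ha => ?_)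
      exact (hlow a ⟨ha.1, not_le.1 ha.2⟩).1
    · have hcompl : {a | f β' a ≤ h a}ᶜ ∈ D := hD1 _ hfb
      have he : {a | f β' a ≤ h a}ᶜ = {a | h a < f β' a} := by
        ext a; simp [not_le]
      rwa [he] at hcompl
  have hN : {a | ¬ Cardinal.mk A < (g a).cof} ∈ I := by
    refine hI.sub (fun a ha => ?_) (hI.un hZ0 (hI.un hZs hZc))
    rcases Ordinal.zero_or_succ_or_isSuccLimit (g a) with h0 | hs | hl
    · exact Or.inl h0
    · exact Or.inr (Or.inl (by obtain ⟨b, hb⟩ := hs; exact ⟨b, hb.symm⟩))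
    · exact Or.inr (Or.inr ⟨hl, not_lt.1 ha⟩)
  set g' : A → Ordinal.{0} :=
    fun a => if Cardinal.mk A < (g a).cof then g a else (Order.succ (Cardinal.mk A)).ord
    with hg'def
  have hg'eq : ∀ a, Cardinal.mk A < (g a).cof → g' a = g a := by
    intro a hcof; simp only [hg'def]; exact if_pos hcof
  have hg'eq' : ∀ a, ¬ Cardinal.mk A < (g a).cof → g' a = (Order.succ (Cardinal.mk A)).ord := by
    intro a hcof; simp only [hg'def]; exact if_neg hcof
  refine ⟨g', ?_, ?_, ?_⟩
  · intro α hα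
    refine hI.sub (fun a ha => ?_) (hI.un (hub α hα) hN)
    simp only [mem_setOf_eq] at ha
    by_cases hcof : Cardinal.mk A < (g a).cof
    · rw [hg'eq a hcof] at ha
      exact Or.inl ha
    · exact Or.inr hcof
  · intro h hh
    refine hex h (hI.sub (fun a ha => ?_) (hI.un hh hN))
    simp only [mem_setOf_eq] at ha
    by_cases hcof : Cardinal.mk A < (g a).cof
    · refine Or.inl ?_
      show g' a ≤ h a
      rw [hg'eq a hcof]
      exact ha
    · exact Or.inr hcof
  · intro a
    by_cases hcof : Cardinal.mk A < (g a).cof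
    · rw [hg'eq a hcof]; exact hcof
    · rw [hg'eq' a hcof, (Cardinal.isRegular_succ (Cardinal.aleph0_le_mk A)).cof_eq]
      exact Order.lt_succ _

end Stmt10

/-- The Trichotomy Theorem. -/
theorem stmt_10 {A : Type} (hA : Infinite A) (I : Set (Set A))
    (hI₀ : ∅ ∈ I) (hIdown : ∀ s ∈ I, ∀ t, t ⊆ s → t ∈ I)
    (hIunion : ∀ s ∈ I, ∀ t ∈ I, s ∪ t ∈ I) (hIproper : Set.univ ∉ I)
    (lam : Cardinal.{0}) (hreg : lam.IsRegular) (hgt : (Order.succ (Cardinal.mk A)) < lam)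
    (f : Ordinal.{0} → A → Ordinal.{0})
    (hinc : ∀ α β, α < β → β < lam.ord → ltIdeal I (f α) (f β)) :
    -- (Good): an exact upper bound with pointwise cofinality `> |A|`
    (∃ g : A → Ordinal.{0},
        (∀ α, α < lam.ord → ltIdeal I (f α) g) ∧
        (∀ h : A → Ordinal.{0}, ltIdeal I h g → ∃ α, α < lam.ord ∧ ltIdeal I h (f α)) ∧
        (∀ a, Cardinal.mk A < (g a).cof)) ∨
    -- (Bad): small sets trap the sequence mod an ultrafilter extending the dual of `I`
    (∃ S : A → Set Ordinal.{0},
        (∀ a, Cardinal.mk (S a) ≤ Cardinal.lift.{1,0} (Cardinal.mk A)) ∧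
        ∃ D : Ultrafilter A, (∀ s ∈ I, sᶜ ∈ D) ∧
          ∀ α, α < lam.ord → ∃ h : A → Ordinal.{0}, (∀ a, h a ∈ S a) ∧
            ∃ β, β < lam.ord ∧
              {a | f α a < h a} ∈ D ∧ {a | h a < f β a} ∈ D) ∨
    -- (Ugly): some `g` for which the sets `t_α` do not stabilize mod `I`
    (∃ g : A → Ordinal.{0},
        ¬ ∃ α₀, α₀ < lam.ord ∧ ∀ α β, α₀ ≤ α → α ≤ β → β < lam.ord →
          symmDiff {a | g a < f α a} {a | g a < f β a} ∈ I) := by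
  classical
  by_cases hUg : ∃ g : A → Ordinal.{0},
      ¬ ∃ α₀, α₀ < lam.ord ∧ ∀ α β, α₀ ≤ α → α ≤ β → β < lam.ord →
        symmDiff {a | g a < f α a} {a | g a < f β a} ∈ I
  · exact Or.inr (Or.inr hUg)
  push_neg at hUg
  have hI : Stmt10.HIdeal I := ⟨hI₀, hIdown, hIunion⟩
  have hstab : Stmt10.HStab I f lam.ord := fun g => hUg g
  have hinc' : Stmt10.HInc I f lam.ord := fun α β h1 h2 => hinc α β h1 h2
  by_cases hBad : ∃ S : A → Set Ordinal.{0},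
      (∀ a, Cardinal.mk (S a) ≤ Cardinal.lift.{1,0} (Cardinal.mk A)) ∧
      ∃ D : Ultrafilter A, (∀ s ∈ I, sᶜ ∈ D) ∧
        ∀ α, α < lam.ord → ∃ h : A → Ordinal.{0}, (∀ a, h a ∈ S a) ∧
          ∃ β, β < lam.ord ∧
            {a | f α a < h a} ∈ D ∧ {a | h a < f β a} ∈ D
  · exact Or.inr (Or.inl hBad)
  obtain ⟨g, hub, hex⟩ := Stmt10.exists_eub hA hI hreg hgt hstab hinc' hBad
  obtain ⟨g', h1, h2, h3⟩ := Stmt10.eub_good hA hI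
    (Cardinal.isSuccLimit_ord hreg.aleph0_le) hinc' g hub hex hBad
  exact Or.inl ⟨g', fun α hα => h1 α hα, fun h hh => h2 h hh, h3⟩
end
end

section
/- Let μₙ (n < ω) be strictly increasing regular cardinals with supremum μ and q a normal condition in Q. Then there exists a family {q_α : α < μ^{ℵ₀}} of pairwise incompatible conditions in Q below q. In particular, the cellularity of the poset Q of closed size-μ subsets of μ is at least μ^{ℵ₀}. -/
open Cardinal Set

noncomputable section

/-- Cardinality of a set of ordinals. -/
def scard (s : Set Ordinal.{0}) : Cardinal.{1} := Cardinal.mk s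

/-- The set of accumulation points of a set of ordinals `p`:
ordinals `α` such that `p ∩ α` is nonempty and unbounded in `α`. -/
def accSet (p : Set Ordinal.{0}) : Set Ordinal.{0} :=
  {α | (p ∩ Set.Iio α).Nonempty ∧ α = sSup (p ∩ Set.Iio α)}

/-- A set of ordinals is closed iff it contains all of its accumulation
points below its supremum. -/
def IsClosedCond (q : Set Ordinal.{0}) : Prop :=
  accSet q ∩ Set.Iio (sSup q) ⊆ q

/-- Order type of a set of ordinals. -/
def otp (s : Set Ordinal.{0}) : Ordinal.{1} :=
  Ordinal.type ((· < ·) : s → s → Prop)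

/-- Membership in the poset `P`: subsets of `μ` of cardinality `μ`. -/
def InP (μ : Cardinal.{0}) (p : Set Ordinal.{0}) : Prop :=
  p ⊆ Set.Iio μ.ord ∧ scard p = Cardinal.lift.{1,0} μ

/-- The almost-inclusion ordering: `p₁ ≤ p₂` iff `|p₁ \ p₂| < μ`. -/
def condLe (μ : Cardinal.{0}) (p₁ p₂ : Set Ordinal.{0}) : Prop :=
  scard (p₁ \ p₂) < Cardinal.lift.{1,0} μ

/-- Membership in the poset `Q`: closed subsets of `μ` of cardinality `μ`. -/
def InQ (μ : Cardinal.{0}) (q : Set Ordinal.{0}) : Prop :=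
  InP μ q ∧ IsClosedCond q

/-- The interval `[μₙ, μₙ₊₁)`. -/
def interval (μseq : ℕ → Cardinal.{0}) (n : ℕ) : Set Ordinal.{0} :=
  Set.Ico ((μseq n).ord) ((μseq (n+1)).ord)

/-- `a(q) = {n : q ∩ [μₙ, μₙ₊₁) ≠ ∅}`. -/
def aSet (μseq : ℕ → Cardinal.{0}) (q : Set Ordinal.{0}) : Set ℕ :=
  {n | (q ∩ interval μseq n).Nonempty}

/-- Normality: letting `⟨mₙ⟩` enumerate `a(q)` increasingly,
`otp (q ∩ [μ_{mₙ}, μ_{mₙ+1})) = μₙ + 1`. -/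
def IsNormalCond (μseq : ℕ → Cardinal.{0}) (q : Set Ordinal.{0}) : Prop :=
  ∃ m : ℕ → ℕ, StrictMono m ∧ Set.range m = aSet μseq q ∧
    ∀ n, otp (q ∩ interval μseq (m n)) = Ordinal.lift.{1,0} ((μseq n).ord + 1)

/-- `χ⁺_q(n) = sup (q ∩ [μₙ, μₙ₊₁))`. -/
def chiP (μseq : ℕ → Cardinal.{0}) (q : Set Ordinal.{0}) (n : ℕ) : Ordinal.{0} :=
  sSup (q ∩ interval μseq n)

/-- `χ⁻_q(n) = min (q ∩ [μₙ, μₙ₊₁))`. -/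
def chiM (μseq : ℕ → Cardinal.{0}) (q : Set Ordinal.{0}) (n : ℕ) : Ordinal.{0} :=
  sInf (q ∩ interval μseq n)

/-- `μₙ` is a strictly increasing sequence of regular cardinals with supremum `μ`. -/
def GoodSeq (μ : Cardinal.{0}) (μseq : ℕ → Cardinal.{0}) : Prop :=
  StrictMono μseq ∧ (∀ n, (μseq n).IsRegular) ∧ μ = ⨆ n, μseq n


namespace Stmt14Aux

open Cardinal Set Ordinal

lemma bdd_of_subset_Iio {s : Set Ordinal.{0}} {b : Ordinal.{0}} (h : s ⊆ Set.Iio b) :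
    BddAbove s := ⟨b, fun _ hx => (h hx).le⟩

/-- Monotonicity of accumulation sets. -/
lemma accSet_mono {P Q : Set Ordinal.{0}} (h : P ⊆ Q) : accSet P ⊆ accSet Q := by
  rintro α ⟨hne, heq⟩
  have hsub : P ∩ Set.Iio α ⊆ Q ∩ Set.Iio α := inter_subset_inter_left _ h
  refine ⟨hne.mono hsub, le_antisymm ?_ ?_⟩
  · calc α = sSup (P ∩ Set.Iio α) := heq
      _ ≤ sSup (Q ∩ Set.Iio α) :=
        csSup_le_csSup (bdd_of_subset_Iio inter_subset_right) hne hsub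
  · exact csSup_le (hne.mono hsub) fun x hx => hx.2.le

lemma accSet_union_self {P : Set Ordinal.{0}} : accSet (P ∪ accSet P) ⊆ accSet P := by
  rintro β ⟨hne, heq⟩
  have hPne : (P ∩ Set.Iio β).Nonempty := by
    obtain ⟨x, hx, hxβ⟩ := hne
    rcases hx with hx | hx
    · exact ⟨x, hx, hxβ⟩
    · obtain ⟨y, hy, hyx⟩ := hx.1
      exact ⟨y, hy, show y < β from lt_trans hyx hxβ⟩
  refine ⟨hPne, le_antisymm ?_ (csSup_le hPne fun x hx => hx.2.le)⟩
  calc β = sSup ((P ∪ accSet P) ∩ Set.Iio β) := heq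
    _ ≤ sSup (P ∩ Set.Iio β) := by
        refine csSup_le hne ?_
        rintro d ⟨hd | hd, hdβ⟩
        · exact le_csSup (bdd_of_subset_Iio inter_subset_right) ⟨hd, hdβ⟩
        · calc d = sSup (P ∩ Set.Iio d) := hd.2
            _ ≤ sSup (P ∩ Set.Iio β) :=
              csSup_le_csSup (bdd_of_subset_Iio inter_subset_right) hd.1
                (inter_subset_inter_right _ (Iio_subset_Iio hdβ.le))

lemma accSet_exists_lt {P : Set Ordinal.{0}} {α : Ordinal.{0}} (h : α ∈ accSet P) :
    ∃ x ∈ P, x < α := h.1.imp fun x hx => ⟨hx.1, hx.2⟩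

lemma accSet_le_sSup {P : Set Ordinal.{0}} {α : Ordinal.{0}} (h : α ∈ accSet P)
    (hb : BddAbove P) : α ≤ sSup P := by
  calc α = sSup (P ∩ Set.Iio α) := h.2
    _ ≤ sSup P := csSup_le_csSup hb h.1 inter_subset_left

/-- supremum of a small set of ordinals below a regular cardinal stays below it. -/
lemma sSup_lt_ord_of_small {s : Set Ordinal.{0}} {ν c : Cardinal.{0}}
    (hcard : Cardinal.mk s ≤ Cardinal.lift.{1,0} ν) (hν : ν < c) (hc : c.IsRegular)
    (hsub : s ⊆ Set.Iio c.ord) : sSup s < c.ord := by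
  have hcpos : (0 : Ordinal) < c.ord := by
    calc (0:Ordinal) < ω := Ordinal.omega0_pos
      _ = Cardinal.ord ℵ₀ := (Cardinal.ord_aleph0).symm
      _ ≤ c.ord := Cardinal.ord_le_ord.2 hc.aleph0_le
  rcases s.eq_empty_or_nonempty with rfl | hne
  · simpa using hcpos
  · classical
    have hmk : Cardinal.mk s ≤ Cardinal.mk (ULift.{1,0} ν.out) := by
      rwa [Cardinal.mk_uLift, Cardinal.mk_out]
    obtain ⟨j⟩ := Cardinal.le_def _ _ |>.1 hmk
    obtain ⟨x₀, hx₀⟩ := id hne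
    set g : ν.out → Ordinal.{0} := fun y =>
      if h : ∃ x : s, j x = ULift.up y then (h.choose : Ordinal) else x₀ with hg
    have hgs : ∀ y, g y ∈ s := by
      intro y; rw [hg]; dsimp only
      split
      · next h => exact h.choose.2
      · exact hx₀
    have hsurj : ∀ x (hx : x ∈ s), ∃ y, g y = x := by
      intro x hx
      refine ⟨(j ⟨x, hx⟩).down, ?_⟩
      have hex : ∃ z : s, j z = ULift.up (j ⟨x, hx⟩).down := ⟨⟨x, hx⟩, rfl⟩
      rw [hg]; dsimp only
      rw [dif_pos hex]
      have h2 : j hex.choose = j ⟨x, hx⟩ := hex.choose_spec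
      have h3 := j.injective h2
      rw [h3]
    have hle : sSup s ≤ ⨆ y, g y := by
      refine csSup_le hne fun x hx => ?_
      obtain ⟨y, hy⟩ := hsurj x hx
      rw [← hy]
      exact le_ciSup (Ordinal.bddAbove_range _) y
    refine hle.trans_lt (Ordinal.iSup_lt_ord ?_ fun y => hsub (hgs y))
    rwa [Cardinal.mk_out, hc.cof_eq]

end Stmt14Aux
namespace Stmt14Aux

open Cardinal Set Ordinal

lemma not_bddAbove_union_Ici {B : Set Ordinal.{0}} {b : Ordinal.{0}} :
    ¬ BddAbove (B ∪ Set.Ici b) := by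
  rintro ⟨x, hx⟩
  have h1 : max x b + 1 ∈ B ∪ Set.Ici b :=
    Or.inr (le_trans (le_max_right x b) le_self_add)
  have h2 := hx h1
  have h3 : x < max x b + 1 := by
    refine lt_of_le_of_lt (le_max_left x b) ?_
    rw [Ordinal.add_one_eq_succ]
    exact Order.lt_succ _
  exact absurd h2 (not_le.mpr h3)

lemma enumOrd_mem_of_card_lt {B : Set Ordinal.{0}} {b : Ordinal.{0}} (hB : B ⊆ Set.Iio b)
    {κ : Cardinal.{0}} (hBcard : Cardinal.lift.{1,0} κ ≤ Cardinal.mk B) {ξ : Ordinal.{0}}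
    (hξ : ξ.card < κ) : Ordinal.enumOrd (B ∪ Set.Ici b) ξ ∈ B := by
  have hs : ¬ BddAbove (B ∪ Set.Ici b) := not_bddAbove_union_Ici
  rcases Ordinal.enumOrd_mem hs ξ with h | h
  · exact h
  · exfalso
    have himg : B ⊆ Ordinal.enumOrd (B ∪ Set.Ici b) '' Set.Iio ξ := by
      intro x hx
      obtain ⟨ζ, hζ⟩ := Ordinal.enumOrd_surjective hs (Or.inl hx : x ∈ B ∪ Set.Ici b)
      have hζξ : ζ < ξ := by
        have hlt : Ordinal.enumOrd (B ∪ Set.Ici b) ζ < Ordinal.enumOrd (B ∪ Set.Ici b) ξ := by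
          rw [hζ]; exact lt_of_lt_of_le (hB hx) h
        exact (Ordinal.enumOrd_strictMono hs).lt_iff_lt.mp hlt
      exact ⟨ζ, hζξ, hζ⟩
    have hcon : Cardinal.lift.{1,0} κ ≤ Cardinal.lift.{1,0} ξ.card := by
      calc Cardinal.lift.{1,0} κ ≤ Cardinal.mk B := hBcard
        _ ≤ Cardinal.mk (Ordinal.enumOrd (B ∪ Set.Ici b) '' Set.Iio ξ) :=
            Cardinal.mk_le_mk_of_subset himg
        _ ≤ Cardinal.mk (Set.Iio ξ) := Cardinal.mk_image_le
        _ = Cardinal.lift.{1,0} ξ.card := Ordinal.mk_Iio_ordinal ξ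
    exact absurd (Cardinal.lift_le.mp hcon) (not_le.mpr hξ)

lemma mk_pi_branches (μ : Cardinal.{0}) (hinf : Cardinal.aleph0 < μ)
    (μseq : ℕ → Cardinal.{0}) (hmono : StrictMono μseq) (hreg : ∀ n, (μseq n).IsRegular)
    (hsup : μ = ⨆ n, μseq n) :
    Cardinal.mk (∀ n : ℕ, ↥(Set.Iio ((μseq n).ord))) =
      Cardinal.lift.{1,0} (μ ^ Cardinal.aleph0) := by
  classical
  have hle : ∀ n, μseq n ≤ μ := fun n => hsup ▸ le_ciSup (Cardinal.bddAbove_range _) n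
  have hordle : ∀ n, (μseq n).ord ≤ μ.ord := fun n => Cardinal.ord_le_ord.2 (hle n)
  have hpos : ∀ n, (0 : Ordinal) < (μseq n).ord := by
    intro n
    calc (0:Ordinal) < ω := Ordinal.omega0_pos
      _ = Cardinal.ord Cardinal.aleph0 := (Cardinal.ord_aleph0).symm
      _ ≤ (μseq n).ord := Cardinal.ord_le_ord.2 (hreg n).aleph0_le
  have hlim : Order.IsSuccLimit (Cardinal.ord μ) := Cardinal.isSuccLimit_ord hinf.le
  have hfind : ∀ β : Ordinal.{0}, β < μ.ord → ∃ n, β < (μseq n).ord := by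
    intro β hβ
    have hc : β.card < μ := Cardinal.lt_ord.1 hβ
    rw [hsup] at hc
    obtain ⟨n, hn⟩ := (lt_ciSup_iff (Cardinal.bddAbove_range _)).1 hc
    exact ⟨n, Cardinal.lt_ord.2 hn⟩
  have harrow : Cardinal.mk (ℕ → ↥(Set.Iio μ.ord)) =
      Cardinal.lift.{1,0} (μ ^ Cardinal.aleph0) := by
    rw [Cardinal.mk_arrow, Ordinal.mk_Iio_ordinal, Cardinal.card_ord, Cardinal.lift_uzero,
      Cardinal.mk_nat, Cardinal.lift_aleph0, Cardinal.lift_power, Cardinal.lift_aleph0]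
  set e1 : (∀ n : ℕ, ↥(Set.Iio ((μseq n).ord))) → (ℕ → ↥(Set.Iio μ.ord)) :=
    fun f n => ⟨(f n).1, lt_of_lt_of_le (f n).2 (hordle n)⟩ with he1def
  have he1 : Function.Injective e1 := by
    intro f f' h
    funext n
    have hv := congrArg Subtype.val (congrFun h n)
    rw [he1def] at hv
    exact Subtype.ext hv
  set e2 : (ℕ → ↥(Set.Iio μ.ord)) → (∀ n : ℕ, ↥(Set.Iio ((μseq n).ord))) := fun f m =>
    if h : ((f (Nat.unpair m).2) : Ordinal) + 1 < (μseq (Nat.unpair m).1).ord then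
      ⟨((f (Nat.unpair m).2) : Ordinal) + 1,
        lt_of_lt_of_le h (Cardinal.ord_le_ord.2 (hmono.monotone (Nat.unpair_left_le m)))⟩
    else ⟨0, hpos m⟩ with he2def
  have he2 : Function.Injective e2 := by
    intro f f' h
    funext k
    apply Subtype.ext
    have hs1 : ((f k : Ordinal)) + 1 < μ.ord := by
      rw [Ordinal.add_one_eq_succ]; exact hlim.succ_lt (f k).2
    have hs2 : ((f' k : Ordinal)) + 1 < μ.ord := by
      rw [Ordinal.add_one_eq_succ]; exact hlim.succ_lt (f' k).2
    obtain ⟨n1, hn1⟩ := hfind _ hs1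
    obtain ⟨n2, hn2⟩ := hfind _ hs2
    have hb1 : ((f k : Ordinal)) + 1 < (μseq (max n1 n2)).ord :=
      lt_of_lt_of_le hn1 (Cardinal.ord_le_ord.2 (hmono.monotone (le_max_left n1 n2)))
    have hb2 : ((f' k : Ordinal)) + 1 < (μseq (max n1 n2)).ord :=
      lt_of_lt_of_le hn2 (Cardinal.ord_le_ord.2 (hmono.monotone (le_max_right n1 n2)))
    have hck := congrFun h (Nat.pair (max n1 n2) k)
    rw [he2def] at hck
    simp only [Nat.unpair_pair] at hck
    rw [dif_pos hb1, dif_pos hb2] at hck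
    have := congrArg Subtype.val hck
    simpa using this
  refine le_antisymm ?_ ?_
  · exact (Cardinal.mk_le_of_injective he1).trans_eq harrow
  · exact harrow ▸ Cardinal.mk_le_of_injective he2

end Stmt14Aux

open Stmt14Aux in
/-- below every normal condition `q` there is a family of
`μ^{ℵ₀}` pairwise incompatible conditions of `Q`. -/
theorem stmt_14 (μ : Cardinal.{0}) (hinf : Cardinal.aleph0 < μ)
    (hcof : μ.ord.cof = Cardinal.aleph0)
    (μseq : ℕ → Cardinal.{0}) (hseq : GoodSeq μ μseq)
    (q : Set Ordinal.{0}) (hq : InQ μ q) (hn : IsNormalCond μseq q) :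
    ∃ F : Set (Set Ordinal.{0}),
      Cardinal.mk F = Cardinal.lift.{1,0} (μ ^ Cardinal.aleph0) ∧
      (∀ q' ∈ F, InQ μ q' ∧ condLe μ q' q) ∧
      ∀ q₁ ∈ F, ∀ q₂ ∈ F, q₁ ≠ q₂ →
        scard (q₁ ∩ q₂) < Cardinal.lift.{1,0} μ := by
  classical
  obtain ⟨⟨hqsub, hqcard⟩, hqC⟩ := hq
  obtain ⟨m, hm, hmr, hotp⟩ := hn
  obtain ⟨hmono, hreg, hsup⟩ := hseq
  have hqcard' : Cardinal.mk q = Cardinal.lift.{1,0} μ := hqcard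
  set γ : ℕ → Ordinal.{0} := fun n => (μseq n).ord with hγ
  have hseqinf : ∀ n, Cardinal.aleph0 ≤ μseq n := fun n => (hreg n).aleph0_le
  have hle : ∀ n, μseq n ≤ μ := fun n => hsup ▸ le_ciSup (Cardinal.bddAbove_range _) n
  have hltμ : ∀ n, μseq n < μ := fun n =>
    lt_of_lt_of_le (hmono (Nat.lt_succ_self n)) (hle (n+1))
  have hγmono : Monotone γ := fun a b h => Cardinal.ord_le_ord.2 (hmono.monotone h)
  have hγle : ∀ n, γ n ≤ μ.ord := fun n => Cardinal.ord_le_ord.2 (hle n)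
  have hγcard : ∀ n, (γ n).card = μseq n := fun n => Cardinal.card_ord _
  have hγpos : ∀ n, (0:Ordinal) < γ n := by
    intro n
    calc (0:Ordinal) < Ordinal.omega0 := Ordinal.omega0_pos
      _ = Cardinal.ord Cardinal.aleph0 := (Cardinal.ord_aleph0).symm
      _ ≤ γ n := Cardinal.ord_le_ord.2 (hseqinf n)
  have hfind : ∀ β : Ordinal.{0}, β < μ.ord → ∃ n, β < γ n := by
    intro β hβ
    have hc : β.card < μ := Cardinal.lt_ord.1 hβ
    rw [hsup] at hc
    obtain ⟨n, hn'⟩ := (lt_ciSup_iff (Cardinal.bddAbove_range _)).1 hc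
    exact ⟨n, Cardinal.lt_ord.2 hn'⟩
  have hsupq : sSup q = μ.ord := by
    have hqne : q.Nonempty := by
      rw [← Set.nonempty_coe_sort, ← Cardinal.mk_ne_zero_iff, hqcard']
      simp only [ne_eq, Cardinal.lift_eq_zero]
      exact ne_of_gt (lt_trans Cardinal.aleph0_pos hinf)
    refine le_antisymm (csSup_le hqne fun x hx => (hqsub hx).le) ?_
    by_contra hcon
    push_neg at hcon
    have hsub : q ⊆ Set.Iio (sSup q + 1) := by
      intro x hx
      have hxb := le_csSup (bdd_of_subset_Iio hqsub) hx
      rw [Set.mem_Iio, Ordinal.add_one_eq_succ]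
      exact Order.lt_succ_of_le hxb
    have hlim : Order.IsSuccLimit (Cardinal.ord μ) := Cardinal.isSuccLimit_ord hinf.le
    have hlt : sSup q + 1 < μ.ord := by
      rw [Ordinal.add_one_eq_succ]; exact hlim.succ_lt hcon
    have hcon2 : Cardinal.lift.{1,0} μ ≤ Cardinal.lift.{1,0} ((sSup q + 1).card) := by
      calc Cardinal.lift.{1,0} μ = Cardinal.mk q := hqcard'.symm
        _ ≤ Cardinal.mk (Set.Iio (sSup q + 1)) := Cardinal.mk_le_mk_of_subset hsub
        _ = Cardinal.lift.{1,0} ((sSup q + 1).card) := Ordinal.mk_Iio_ordinal _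
    exact absurd (Cardinal.lift_le.mp hcon2) (not_le.mpr (Cardinal.lt_ord.1 hlt))
  -- blocks
  set B : ℕ → Set Ordinal.{0} := fun n => q ∩ interval μseq (m (n+1)) with hB
  have hBsubq : ∀ n, B n ⊆ q := fun n => Set.inter_subset_left
  have hBIco : ∀ n, B n ⊆ Set.Ico (γ (m (n+1))) (γ (m (n+1)+1)) := fun n =>
    Set.inter_subset_right
  have hBcard : ∀ n, Cardinal.mk (B n) = Cardinal.lift.{1,0} (μseq (n+1)) := by
    intro n
    have h1 : (otp (B n)).card = Cardinal.mk (B n) := Ordinal.card_type _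
    rw [← h1, hB]
    show ((otp (q ∩ interval μseq (m (n+1)))).card) = _
    rw [hotp (n+1), ← Ordinal.lift_card, Ordinal.card_add, Ordinal.card_one,
      Cardinal.card_ord, Cardinal.add_one_eq (hseqinf (n+1))]
  set e : ℕ → Ordinal.{0} → Ordinal.{0} :=
    fun n => Ordinal.enumOrd (B n ∪ Set.Ici μ.ord) with he
  have hestrict : ∀ n, StrictMono (e n) := fun n =>
    Ordinal.enumOrd_strictMono not_bddAbove_union_Ici
  have hemem : ∀ n (ξ : Ordinal.{0}), ξ.card ≤ μseq n → e n ξ ∈ B n := by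
    intro n ξ hξ
    exact enumOrd_mem_of_card_lt (fun x hx => hqsub (hBsubq n hx))
      (le_of_eq (hBcard n).symm) (lt_of_le_of_lt hξ (hmono (Nat.lt_succ_self n)))
  -- injections for indexing pieces
  have hmkIio : ∀ n, Cardinal.mk ↥(Set.Iio (γ n)) = Cardinal.lift.{1,0} (μseq n) := by
    intro n
    rw [Ordinal.mk_Iio_ordinal, hγcard]
  have hι : ∀ n : ℕ, ∃ j : (Fin (n+1) → ↥(Set.Iio (γ n))) → ↥(Set.Iio (γ n)),
      Function.Injective j := by
    intro n
    have hcount : Cardinal.mk (Fin (n+1) → ↥(Set.Iio (γ n))) =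
        Cardinal.lift.{1,0} (μseq n) := by
      rw [Cardinal.mk_arrow, hmkIio, Cardinal.lift_uzero, Cardinal.mk_fin,
        Cardinal.lift_natCast, Cardinal.power_natCast]
      exact Cardinal.power_nat_eq (Cardinal.aleph0_le_lift.2 (hseqinf n))
        (Nat.succ_le_succ (Nat.zero_le n))
    have hle2 : Cardinal.mk (Fin (n+1) → ↥(Set.Iio (γ n))) ≤
        Cardinal.mk ↥(Set.Iio (γ n)) := le_of_eq (by rw [hcount, hmkIio])
    obtain ⟨j⟩ := Cardinal.le_def _ _ |>.1 hle2
    exact ⟨j, j.injective⟩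
  choose ι hιinj using hι
  -- tuples, bases, pieces
  set tup : ∀ n : ℕ, (∀ k : ℕ, ↥(Set.Iio (γ k))) → (Fin (n+1) → ↥(Set.Iio (γ n))) :=
    fun n g i => ⟨(g i.1).1, lt_of_lt_of_le (g i.1).2 (hγmono (Nat.le_of_lt_succ i.2))⟩
    with htup
  set base : ∀ _ : ℕ, (∀ k : ℕ, ↥(Set.Iio (γ k))) → Ordinal.{0} :=
    fun n g => (γ n * 2) * (ι n (tup n g)).1 with hbase
  set Pp : ∀ _ : ℕ, (∀ k : ℕ, ↥(Set.Iio (γ k))) → Set Ordinal.{0} :=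
    fun n g => e n '' Set.Ico (base n g) (base n g + γ n) with hPp
  set D : ∀ _ : ℕ, (∀ k : ℕ, ↥(Set.Iio (γ k))) → Set Ordinal.{0} :=
    fun n g => Pp n g ∪ accSet (Pp n g) with hD
  set Qf : (∀ k : ℕ, ↥(Set.Iio (γ k))) → Set Ordinal.{0} :=
    fun g => ⋃ n, D n g with hQf
  have hidxbound : ∀ n g, base n g + γ n ≤ (γ n * 2) * γ n := by
    intro n g
    have h1 : base n g + γ n ≤ base n g + γ n * 2 := by
      refine add_le_add_right ?_ _
      calc γ n = γ n * 1 := (mul_one _).symm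
        _ ≤ γ n * 2 := mul_le_mul_right one_le_two _
    have h2 : base n g + γ n * 2 = (γ n * 2) * ((ι n (tup n g)).1 + 1) := by
      rw [hbase, Ordinal.add_one_eq_succ, Ordinal.mul_succ]
    have h3 : (γ n * 2) * ((ι n (tup n g)).1 + 1) ≤ (γ n * 2) * γ n := by
      refine mul_le_mul_right ?_ _
      rw [Ordinal.add_one_eq_succ]
      exact Order.succ_le_of_lt (ι n (tup n g)).2
    exact h1.trans (h2 ▸ h3)
  have hcardprod : ∀ n : ℕ, ((γ n * 2) * γ n).card = μseq n := by
    intro n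
    rw [Ordinal.card_mul, Ordinal.card_mul, hγcard]
    rw [show Ordinal.card 2 = 2 from Ordinal.card_ofNat 2]
    have h2le : (2:Cardinal) ≤ μseq n :=
      le_trans (by exact_mod_cast (Cardinal.nat_lt_aleph0 2).le) (hseqinf n)
    have h5 : μseq n * 2 = μseq n := by
      refine le_antisymm (le_trans (mul_le_mul_right h2le _)
        (le_of_eq (Cardinal.mul_eq_self (hseqinf n)))) ?_
      calc μseq n = μseq n * 1 := (mul_one _).symm
        _ ≤ μseq n * 2 := mul_le_mul_right one_le_two _
    rw [h5, Cardinal.mul_eq_self (hseqinf n)]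
  have hidxcard : ∀ n g (ξ : Ordinal.{0}), ξ ≤ base n g + γ n → ξ.card ≤ μseq n := by
    intro n g ξ hξ
    have h2 := Ordinal.card_le_card (hξ.trans (hidxbound n g))
    rwa [hcardprod] at h2
  have hPsubB : ∀ n g, Pp n g ⊆ B n := by
    rintro n g x ⟨ξ, hξ, rfl⟩
    exact hemem n ξ (hidxcard n g ξ hξ.2.le)
  have hPne : ∀ n g, (Pp n g).Nonempty := by
    intro n g
    refine ⟨e n (base n g), ⟨base n g, ⟨le_refl _, ?_⟩, rfl⟩⟩
    have hz := add_lt_add_right (hγpos n) (base n g)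
    rwa [add_zero] at hz
  have hPbdd : ∀ n g, BddAbove (Pp n g) :=
    fun n g => bdd_of_subset_Iio (fun x hx => ((hBIco n) (hPsubB n g hx)).2)
  have hPcard_le : ∀ n g, Cardinal.mk (Pp n g) ≤ Cardinal.lift.{1,0} (μseq n) := by
    intro n g
    calc Cardinal.mk (Pp n g) ≤ Cardinal.mk (Set.Ico (base n g) (base n g + γ n)) :=
        Cardinal.mk_image_le
      _ ≤ Cardinal.mk (Set.Iio (base n g + γ n)) :=
        Cardinal.mk_le_mk_of_subset Set.Ico_subset_Iio_self
      _ = Cardinal.lift.{1,0} ((base n g + γ n).card) := Ordinal.mk_Iio_ordinal _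
      _ ≤ Cardinal.lift.{1,0} (μseq n) := Cardinal.lift_le.2 (hidxcard n g _ (le_refl _))
  have hPcard_ge : ∀ n g, Cardinal.lift.{1,0} (μseq n) ≤ Cardinal.mk (Pp n g) := by
    intro n g
    have hj : Function.Injective (fun x : ↥(Set.Iio (γ n)) =>
        (⟨e n (base n g + x.1), ⟨base n g + x.1,
          ⟨le_self_add, add_lt_add_right x.2 _⟩, rfl⟩⟩ : ↥(Pp n g))) := by
      intro x y hxy
      have h1 := congrArg Subtype.val hxy
      have h2 := (hestrict n).injective h1
      exact Subtype.ext ((add_right_inj _).1 h2)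
    have hmk := Cardinal.mk_le_of_injective hj
    rwa [hmkIio] at hmk
  have hPsup : ∀ n g, sSup (Pp n g) < γ (m (n+1)+1) := by
    intro n g
    refine sSup_lt_ord_of_small (hPcard_le n g) ?_ (hreg _) ?_
    · exact hmono (Nat.lt_succ_of_le (le_trans (Nat.le_succ n) hm.le_apply))
    · exact fun x hx => ((hBIco n) (hPsubB n g hx)).2
  have hPsubq : ∀ n g, Pp n g ⊆ q := fun n g => subset_trans (hPsubB n g) (hBsubq n)
  have hDsubq : ∀ n g, D n g ⊆ q := by
    intro n g x hx
    rcases hx with hx | hx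
    · exact hPsubq n g hx
    · have h1 : x ∈ accSet q := accSet_mono (hPsubq n g) hx
      have h2 : x < sSup q := by
        rw [hsupq]
        calc x ≤ sSup (Pp n g) := accSet_le_sSup hx (hPbdd n g)
          _ < γ (m (n+1)+1) := hPsup n g
          _ ≤ μ.ord := hγle _
      exact hqC ⟨h1, h2⟩
  have hDIco : ∀ n g, D n g ⊆ Set.Ico (γ (m (n+1))) (γ (m (n+1)+1)) := by
    intro n g x hx
    rcases hx with hx | hx
    · exact hBIco n (hPsubB n g hx)
    · obtain ⟨z, hz, hzx⟩ := accSet_exists_lt hx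
      constructor
      · exact le_trans ((hBIco n) (hPsubB n g hz)).1 hzx.le
      · exact lt_of_le_of_lt (accSet_le_sSup hx (hPbdd n g)) (hPsup n g)
  have hDle_u : ∀ n g x, x ∈ D n g → x ≤ sSup (Pp n g) := by
    intro n g x hx
    rcases hx with hx | hx
    · exact le_csSup (hPbdd n g) hx
    · exact accSet_le_sSup hx (hPbdd n g)
  have hlt_next : ∀ n k g g', n < k → ∀ x ∈ D k g', sSup (Pp n g) < x := by
    intro n k g g' hnk x hx
    calc sSup (Pp n g) < γ (m (n+1)+1) := hPsup n g
      _ ≤ γ (m (k+1)) := hγmono (Nat.succ_le_of_lt (hm (Nat.succ_lt_succ hnk)))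
      _ ≤ x := (hDIco k g' hx).1
  have humono : ∀ n k g, n ≤ k → sSup (Pp n g) ≤ sSup (Pp k g) := by
    intro n k g hnk
    rcases Nat.eq_or_lt_of_le hnk with rfl | hlt
    · exact le_refl _
    · obtain ⟨x, hx⟩ := hPne k g
      exact le_of_lt (lt_of_lt_of_le (hlt_next n k g g hlt x (Or.inl hx))
        (le_csSup (hPbdd k g) hx))
  have hu_ge : ∀ n g, γ (n+1) ≤ sSup (Pp n g) := by
    intro n g
    obtain ⟨x, hx⟩ := hPne n g
    calc γ (n+1) ≤ γ (m (n+1)) := hγmono hm.le_apply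
      _ ≤ x := (hBIco n (hPsubB n g hx)).1
      _ ≤ sSup (Pp n g) := le_csSup (hPbdd n g) hx
  have hQsubq : ∀ g, Qf g ⊆ q := fun g => Set.iUnion_subset fun n => hDsubq n g
  have hQcard : ∀ g, Cardinal.mk (Qf g) = Cardinal.lift.{1,0} μ := by
    intro g
    refine le_antisymm (hqcard' ▸ Cardinal.mk_le_mk_of_subset (hQsubq g)) ?_
    have hstep : ∀ n, Cardinal.lift.{1,0} (μseq n) ≤ Cardinal.mk (Qf g) := by
      intro n
      refine le_trans (hPcard_ge n g) (Cardinal.mk_le_mk_of_subset ?_)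
      exact subset_trans Set.subset_union_left (Set.subset_iUnion (fun k => D k g) n)
    have hlift : Cardinal.lift.{1,0} μ = ⨆ n, Cardinal.lift.{1,0} (μseq n) := by
      rw [hsup, Cardinal.lift_iSup (Cardinal.bddAbove_range _)]
    rw [hlift]
    exact ciSup_le hstep
  have hclosed : ∀ g, IsClosedCond (Qf g) := by
    intro g
    rintro α ⟨⟨hne, heq⟩, hlt⟩
    have hQne : (Qf g).Nonempty := by
      obtain ⟨x, hx⟩ := hPne 0 g
      exact ⟨x, Set.mem_iUnion.2 ⟨0, Or.inl hx⟩⟩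
    have hαμ : α < μ.ord :=
      lt_of_lt_of_le hlt (csSup_le hQne fun x hx => (hqsub (hQsubq g hx)).le)
    have hex : ∃ n, α ≤ sSup (Pp n g) := by
      obtain ⟨k, hk⟩ := hfind α hαμ
      exact ⟨k, le_trans (le_trans hk.le (hγmono (Nat.le_succ k))) (hu_ge k g)⟩
    have hNle : α ≤ sSup (Pp (Nat.find hex) g) := Nat.find_spec hex
    have hNmin : ∀ k, k < Nat.find hex → sSup (Pp k g) < α := fun k hk =>
      not_le.1 (Nat.find_min hex hk)
    have hkcases : ∀ x, x ∈ Qf g → x < α → ∃ k, k ≤ Nat.find hex ∧ x ∈ D k g := by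
      intro x hx hxα
      obtain ⟨k, hk⟩ := Set.mem_iUnion.1 hx
      refine ⟨k, ?_, hk⟩
      by_contra hcon
      push_neg at hcon
      exact absurd ((hNle.trans_lt (hlt_next _ k g g hcon x hk)).trans hxα) (lt_irrefl α)
    have hMne : (D (Nat.find hex) g ∩ Set.Iio α).Nonempty := by
      by_contra hMe
      rw [Set.not_nonempty_iff_eq_empty] at hMe
      rcases Nat.eq_zero_or_pos (Nat.find hex) with h0 | hposN
      · obtain ⟨x, hx, hxα⟩ := hne
        obtain ⟨k, hkN, hkD⟩ := hkcases x hx hxα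
        have hk0 : k = Nat.find hex := by omega
        have hmem : x ∈ D (Nat.find hex) g ∩ Set.Iio α := ⟨hk0 ▸ hkD, hxα⟩
        rw [hMe] at hmem
        exact absurd hmem (Set.notMem_empty x)
      · obtain ⟨N', hN'⟩ := Nat.exists_eq_succ_of_ne_zero (Nat.pos_iff_ne_zero.1 hposN)
        have hub : ∀ x ∈ Qf g ∩ Set.Iio α, x ≤ sSup (Pp N' g) := by
          rintro x ⟨hx, hxα⟩
          obtain ⟨k, hkN, hkD⟩ := hkcases x hx hxα
          have hkN' : k ≤ N' := by
            rcases Nat.lt_or_ge k (Nat.find hex) with h | h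
            · omega
            · exfalso
              have hk0 : k = Nat.find hex := le_antisymm hkN h
              have hmem : x ∈ D (Nat.find hex) g ∩ Set.Iio α := ⟨hk0 ▸ hkD, hxα⟩
              rw [hMe] at hmem
              exact absurd hmem (Set.notMem_empty x)
          exact le_trans (hDle_u k g x hkD) (humono k N' g hkN')
        have h1 : α ≤ sSup (Pp N' g) := le_trans (le_of_eq heq) (csSup_le hne hub)
        exact absurd h1 (not_le.2 (hNmin N' (by omega)))
    have hMsup : α = sSup (D (Nat.find hex) g ∩ Set.Iio α) := by
      refine le_antisymm ?_ (csSup_le hMne fun x hx => hx.2.le)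
      by_contra hcon
      push_neg at hcon
      rcases Nat.eq_zero_or_pos (Nat.find hex) with h0 | hposN
      · have h1 : α ≤ sSup (D (Nat.find hex) g ∩ Set.Iio α) := by
          refine le_trans (le_of_eq heq) (csSup_le hne fun x hx => ?_)
          obtain ⟨k, hkN, hkD⟩ := hkcases x hx.1 hx.2
          have hk0 : k = Nat.find hex := by omega
          exact le_csSup (bdd_of_subset_Iio (fun y hy => hy.2)) ⟨hk0 ▸ hkD, hx.2⟩
        exact absurd h1 (not_le.2 hcon)
      · obtain ⟨N', hN'⟩ := Nat.exists_eq_succ_of_ne_zero (Nat.pos_iff_ne_zero.1 hposN)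
        have h1 : α ≤ max (sSup (Pp N' g)) (sSup (D (Nat.find hex) g ∩ Set.Iio α)) := by
          refine le_trans (le_of_eq heq) (csSup_le hne fun x hx => ?_)
          obtain ⟨k, hkN, hkD⟩ := hkcases x hx.1 hx.2
          rcases Nat.lt_or_ge k (Nat.find hex) with h | h
          · exact le_max_of_le_left
              (le_trans (hDle_u k g x hkD) (humono k N' g (by omega)))
          · have hk0 : k = Nat.find hex := le_antisymm hkN h
            exact le_max_of_le_right
              (le_csSup (bdd_of_subset_Iio (fun y hy => hy.2)) ⟨hk0 ▸ hkD, hx.2⟩)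
        exact absurd h1 (not_le.2 (max_lt (hNmin N' (by omega)) hcon))
    have hacc : α ∈ accSet (Pp (Nat.find hex) g) :=
      accSet_union_self (P := Pp (Nat.find hex) g) ⟨hMne, hMsup⟩
    exact Set.mem_iUnion.2 ⟨Nat.find hex, Or.inr hacc⟩
  have hkey : ∀ n g g', (ι n (tup n g)).1 < (ι n (tup n g')).1 →
      ∀ x ∈ D n g, ∀ y ∈ D n g', x < y := by
    intro n g g' hab x hx y hy
    have h1 : x ≤ e n (base n g + γ n) := by
      refine le_trans (hDle_u n g x hx) (csSup_le (hPne n g) ?_)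
      rintro z ⟨ξ, hξ, rfl⟩
      exact le_of_lt (hestrict n hξ.2)
    have h2 : e n (base n g + γ n) < e n (base n g') := by
      refine hestrict n ?_
      calc base n g + γ n < base n g + γ n * 2 := by
            refine add_lt_add_right ?_ _
            have h0 := mul_lt_mul_of_pos_left (one_lt_two : (1:Ordinal) < 2) (hγpos n)
            rwa [mul_one] at h0
        _ = (γ n * 2) * ((ι n (tup n g)).1 + 1) := by
            rw [hbase, Ordinal.add_one_eq_succ, Ordinal.mul_succ]
        _ ≤ (γ n * 2) * (ι n (tup n g')).1 := by
            refine mul_le_mul_right ?_ _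
            rw [Ordinal.add_one_eq_succ]
            exact Order.succ_le_of_lt hab
        _ = base n g' := by rw [hbase]
    have h3 : e n (base n g') ≤ y := by
      rcases hy with hy | hy
      · obtain ⟨ξ, hξ, rfl⟩ := hy
        exact (hestrict n).monotone hξ.1
      · obtain ⟨z, hz, hzy⟩ := accSet_exists_lt hy
        obtain ⟨ξ, hξ, rfl⟩ := hz
        exact le_of_lt (lt_of_le_of_lt ((hestrict n).monotone hξ.1) hzy)
    exact lt_of_le_of_lt h1 (lt_of_lt_of_le h2 h3)
  have hsmall : ∀ g g', g ≠ g' →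
      Cardinal.mk ↥(Qf g ∩ Qf g') < Cardinal.lift.{1,0} μ := by
    intro g g' hgg
    have hexi : ∃ i, g i ≠ g' i := by
      by_contra hcon
      push_neg at hcon
      exact hgg (funext hcon)
    obtain ⟨i, hi⟩ := hexi
    have hdisj : ∀ n, i ≤ n → ∀ x, x ∈ D n g → x ∉ D n g' := by
      intro n hin x hx hx'
      have htupne : tup n g ≠ tup n g' := by
        intro hcon
        apply hi
        have h1 := congrFun hcon ⟨i, Nat.lt_succ_of_le hin⟩
        have h2 := congrArg Subtype.val h1
        rw [htup] at h2
        exact Subtype.ext h2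
      have hιne : (ι n (tup n g)).1 ≠ (ι n (tup n g')).1 := by
        intro hcon
        exact htupne (hιinj n (Subtype.ext hcon))
      rcases lt_or_gt_of_ne hιne with hlt2 | hgt2
      · exact lt_irrefl x (hkey n g g' hlt2 x hx x hx')
      · exact lt_irrefl x (hkey n g' g hgt2 x hx' x hx)
    have hgen : ∀ (a b : ℕ) ga gb, a < b → ∀ x, x ∈ D a ga → x ∈ D b gb → False := by
      intro a b ga gb hab x hxa hxb
      have h1 : x < γ (m (a+1)+1) := (hDIco a ga hxa).2
      have h2 : γ (m (a+1)+1) ≤ γ (m (b+1)) :=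
        hγmono (Nat.succ_le_of_lt (hm (Nat.succ_lt_succ hab)))
      have h3 : γ (m (b+1)) ≤ x := (hDIco b gb hxb).1
      exact absurd (lt_of_lt_of_le h1 (le_trans h2 h3)) (lt_irrefl x)
    have hsub : Qf g ∩ Qf g' ⊆ Set.Iio (γ (m i + 1)) := by
      rintro x ⟨hx, hx'⟩
      obtain ⟨n, hn⟩ := Set.mem_iUnion.1 hx
      obtain ⟨k, hk⟩ := Set.mem_iUnion.1 hx'
      have hnk : n = k := by
        rcases Nat.lt_trichotomy n k with h | h | h
        · exact (hgen n k g g' h x hn hk).elim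
        · exact h
        · exact (hgen k n g' g h x hk hn).elim
      subst hnk
      have hni : n < i := by
        by_contra hge
        push_neg at hge
        exact hdisj n hge x hn hk
      have h1 : x < γ (m (n+1)+1) := (hDIco n g hn).2
      exact lt_of_lt_of_le h1 (hγmono (Nat.succ_le_succ (hm.monotone (Nat.succ_le_of_lt hni))))
    calc Cardinal.mk ↥(Qf g ∩ Qf g') ≤ Cardinal.mk ↥(Set.Iio (γ (m i + 1))) :=
        Cardinal.mk_le_mk_of_subset hsub
      _ = Cardinal.lift.{1,0} ((γ (m i + 1)).card) := Ordinal.mk_Iio_ordinal _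
      _ = Cardinal.lift.{1,0} (μseq (m i + 1)) := by rw [hγcard]
      _ < Cardinal.lift.{1,0} μ := Cardinal.lift_lt.2 (hltμ _)
  have hQinj : Function.Injective Qf := by
    intro g g' hqq
    by_contra hne2
    have h1 := hsmall g g' hne2
    rw [hqq, Set.inter_self] at h1
    exact absurd h1 (not_lt.2 (le_of_eq (hQcard g').symm))
  refine ⟨Set.range Qf, ?_, ?_, ?_⟩
  · rw [Cardinal.mk_range_eq _ hQinj]
    exact mk_pi_branches μ hinf μseq hmono hreg hsup
  · rintro q' ⟨g, rfl⟩
    refine ⟨⟨⟨subset_trans (hQsubq g) hqsub, hQcard g⟩, hclosed g⟩, ?_⟩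
    have hdiff : Qf g \ q = ∅ := Set.diff_eq_empty.2 (hQsubq g)
    show scard (Qf g \ q) < Cardinal.lift.{1,0} μ
    rw [hdiff]
    show Cardinal.mk ↥(∅ : Set Ordinal.{0}) < Cardinal.lift.{1,0} μ
    rw [Cardinal.mk_emptyCollection]
    exact lt_of_lt_of_le Cardinal.aleph0_pos (Cardinal.aleph0_le_lift.2 hinf.le)
  · rintro q₁ ⟨g, rfl⟩ q₂ ⟨g', rfl⟩ hne12
    exact hsmall g g' (fun hcon => hne12 (congrArg Qf hcon))
end
end
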